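/- Let n ≥ 1, p > 1, x, z ∈ S^n with ∢(x,z) = π/2, and μ a Borel probability measure on S^n. Then lim_{s→0+} [T^p_μ(cos s · x + sin s · z) − 2 T^p_μ(x) + T^p_μ(cos s · x − sin s · z)]/s = −2 p π^{p−1} μ({−x}). -/

import Mathlib

open MeasureTheory Filter

/-- The `p`-Wasserstein distance with cost function `c` (the distance of the
underlying space): infimum over couplings of `∫ c(x,y)^p dπ`, to the power `1/p`. -/
noncomputable def wassersteinDist {X : Type*} [MeasurableSpace X]
    (c : X → X → ℝ) (p : ℝ) (μ ν : Measure X) : ℝ :=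
  sInf {r : ℝ | ∃ π : Measure (X × X), IsProbabilityMeasure π ∧
      π.map Prod.fst = μ ∧ π.map Prod.snd = ν ∧
      r = ∫ q, c q.1 q.2 ^ p ∂π} ^ (1 / p)

/-- The unit sphere of `ℝ^{n+1}`. -/
abbrev Sph (n : ℕ) := Metric.sphere (0 : EuclideanSpace ℝ (Fin (n + 1))) 1

/-- The angular (geodesic) distance on the sphere: `∢(x,y) = arccos ⟨x,y⟩`. -/
noncomputable def sphAngle {n : ℕ} (x y : Sph n) : ℝ :=
  Real.arccos (inner ℝ (x : EuclideanSpace ℝ (Fin (n + 1))) (y : EuclideanSpace ℝ (Fin (n + 1))))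

/-- The `p`-Wasserstein potential of a measure on the sphere, evaluated at an
ambient vector `v`: `∫ arccos⟨v,y⟩^p dμ(y)`. -/
noncomputable def sphPotential {n : ℕ} (p : ℝ) (μ : MeasureTheory.Measure (Sph n))
    (v : EuclideanSpace ℝ (Fin (n + 1))) : ℝ :=
  ∫ y, Real.arccos (inner ℝ v (y : EuclideanSpace ℝ (Fin (n + 1)))) ^ p ∂μ

open Real

/-- Lipschitz bound for `t ^ p` on `[0, π]`. -/
lemma rpow_lip_pi {p : ℝ} (hp : 1 ≤ p) {u v : ℝ} (hu : u ∈ Set.Icc 0 π)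
    (hv : v ∈ Set.Icc 0 π) : |u ^ p - v ^ p| ≤ p * π ^ (p - 1) * |u - v| := by
  have h := (convex_Icc (0:ℝ) π).norm_image_sub_le_of_norm_hasDerivWithin_le
    (f := fun t : ℝ => t ^ p) (f' := fun t : ℝ => p * t ^ (p - 1)) (C := p * π ^ (p - 1))
    (fun t ht => (Real.hasDerivAt_rpow_const (Or.inr hp)).hasDerivWithinAt)
    (fun t ht => by
      rw [Real.norm_eq_abs, abs_mul, abs_of_nonneg (by linarith : (0:ℝ) ≤ p),
        abs_of_nonneg (Real.rpow_nonneg ht.1 _)]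
      have : t ^ (p - 1) ≤ π ^ (p - 1) :=
        Real.rpow_le_rpow ht.1 ht.2 (by linarith)
      nlinarith [Real.rpow_nonneg ht.1 (p-1)])
    hv hu
  simpa [Real.norm_eq_abs] using h

/-- Key geometric inequality: moving along a geodesic of speed 1 changes the
arccos-distance by at most `s`. -/
lemma key_ineq {a b s : ℝ} (hab : a ^ 2 + b ^ 2 ≤ 1) (hs : 0 ≤ s) (hs' : s ≤ π) :
    |Real.arccos (a * Real.cos s + b * Real.sin s) - Real.arccos a| ≤ s := by
  set v := a * Real.cos s + b * Real.sin s with hv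
  have hcs := Real.sin_sq_add_cos_sq s
  have ha1 : a ^ 2 ≤ 1 := by nlinarith
  have hvw : v ^ 2 + (a * Real.sin s - b * Real.cos s) ^ 2 = a ^ 2 + b ^ 2 := by
    simp only [hv]; nlinarith
  have hv1 : v ^ 2 ≤ 1 := by nlinarith [sq_nonneg (a * Real.sin s - b * Real.cos s)]
  set w := a * Real.sin s - b * Real.cos s with hw
  have key : Real.cos s ≤ a * v + Real.sqrt (1 - a ^ 2) * Real.sqrt (1 - v ^ 2) := by
    rw [← Real.sqrt_mul (by nlinarith)]
    have h2 : (1 - a ^ 2 - b ^ 2) - b * w ≤ Real.sqrt ((1 - a ^ 2) * (1 - v ^ 2)) := by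
      rcases le_or_gt ((1 - a ^ 2 - b ^ 2) - b * w) 0 with h | h
      · exact h.trans (Real.sqrt_nonneg _)
      · rw [show (1 - a^2) * (1 - v^2) = (1 - a^2 - b^2 - b*w)^2 + (1 - a^2 - b^2) * (b + w)^2 by
          nlinarith]
        calc (1 - a ^ 2 - b ^ 2) - b * w
            = Real.sqrt (((1 - a^2 - b^2) - b*w)^2) := by rw [Real.sqrt_sq h.le]
          _ ≤ _ := Real.sqrt_le_sqrt (by nlinarith)
    have hcos1 := Real.cos_le_one s
    have hexp : a * v - b * w = (a ^ 2 + b ^ 2) * Real.cos s := by rw [hv, hw]; ring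
    nlinarith
  have habs : -1 ≤ a ∧ a ≤ 1 := abs_le.mp (abs_le_one_iff_mul_self_le_one.mpr (by nlinarith))
  have hvabs : -1 ≤ v ∧ v ≤ 1 := abs_le.mp (abs_le_one_iff_mul_self_le_one.mpr (by nlinarith))
  set α := Real.arccos a with hα
  set β := Real.arccos v with hβ
  have hcosd : Real.cos s ≤ Real.cos (β - α) := by
    rw [Real.cos_sub, hα, hβ, Real.cos_arccos habs.1 habs.2, Real.cos_arccos hvabs.1 hvabs.2,
      Real.sin_arccos, Real.sin_arccos]
    linarith [key]
  by_contra hcon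
  push_neg at hcon
  have hmem : |β - α| ∈ Set.Icc 0 π := by
    constructor
    · exact abs_nonneg _
    · rw [abs_sub_le_iff]
      constructor <;>
        [skip; skip] <;>
        nlinarith [Real.arccos_nonneg a, Real.arccos_nonneg v, Real.arccos_le_pi a,
          Real.arccos_le_pi v]
  have h1 : Real.cos |β - α| < Real.cos s :=
    Real.strictAntiOn_cos ⟨hs, hs'⟩ hmem hcon
  rw [Real.cos_abs] at h1
  linarith

/-- Second-difference formula for the Wasserstein potential on the sphere,
case `p > 1`: the limit recovers the mass of the antipodal point. -/
theorem sphere_potential_second_difference {n : ℕ} (hn : 1 ≤ n)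
    {p : ℝ} (hp : 1 < p) (x z : Sph n) (hxz : sphAngle x z = Real.pi / 2)
    (μ : Measure (Sph n)) (hμ : IsProbabilityMeasure μ) :
    Tendsto (fun s : ℝ =>
        (sphPotential p μ (Real.cos s • (x : EuclideanSpace ℝ (Fin (n + 1))) +
            Real.sin s • (z : EuclideanSpace ℝ (Fin (n + 1)))) -
          2 * sphPotential p μ (x : EuclideanSpace ℝ (Fin (n + 1))) +
          sphPotential p μ (Real.cos s • (x : EuclideanSpace ℝ (Fin (n + 1))) -
            Real.sin s • (z : EuclideanSpace ℝ (Fin (n + 1))))) / s)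
      (nhdsWithin 0 (Set.Ioi 0))
      (nhds (-2 * p * Real.pi ^ (p - 1) * (μ {-x}).toReal)) := by
  classical
  haveI := hμ
  have hπ := Real.pi_pos
  have hp0 : (0:ℝ) < p := by linarith
  set X := (x : EuclideanSpace ℝ (Fin (n + 1))) with hX
  set Z := (z : EuclideanSpace ℝ (Fin (n + 1))) with hZ
  have hx1 : ‖X‖ = 1 := mem_sphere_zero_iff_norm.mp x.2
  have hz1 : ‖Z‖ = 1 := mem_sphere_zero_iff_norm.mp z.2
  have habs : |(inner ℝ X Z : ℝ)| ≤ 1 := by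
    simpa [hx1, hz1] using abs_real_inner_le_norm X Z
  have hiXZ : (inner ℝ X Z : ℝ) = 0 := by
    have h1 : Real.arccos (inner ℝ X Z) = Real.pi / 2 := hxz
    have h3 := Real.cos_arccos (abs_le.mp habs).1 (abs_le.mp habs).2
    rw [h1, Real.cos_pi_div_two] at h3
    linarith
  have hiZX : (inner ℝ Z X : ℝ) = 0 := by rw [real_inner_comm]; exact hiXZ
  have bessel : ∀ y : Sph n,
      (inner ℝ X (y : EuclideanSpace ℝ (Fin (n+1))) : ℝ) ^ 2 +
      (inner ℝ Z (y : EuclideanSpace ℝ (Fin (n+1))) : ℝ) ^ 2 ≤ 1 := by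
    intro y
    have hy1 : ‖(y : EuclideanSpace ℝ (Fin (n+1)))‖ = 1 := mem_sphere_zero_iff_norm.mp y.2
    set Y := (y : EuclideanSpace ℝ (Fin (n+1))) with hY
    have h0 : (0:ℝ) ≤ ‖Y - (inner ℝ X Y : ℝ) • X - (inner ℝ Z Y : ℝ) • Z‖ ^ 2 := sq_nonneg _
    have hexp : ‖Y - (inner ℝ X Y : ℝ) • X - (inner ℝ Z Y : ℝ) • Z‖ ^ 2
        = 1 - (inner ℝ X Y : ℝ) ^ 2 - (inner ℝ Z Y : ℝ) ^ 2 := by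
      rw [← real_inner_self_eq_norm_sq]
      simp only [inner_sub_left, inner_sub_right, real_inner_smul_left, real_inner_smul_right,
        real_inner_self_eq_norm_sq, hx1, hy1, hz1, hiXZ, hiZX]
      rw [real_inner_comm Y X, real_inner_comm Y Z]
      simp only [norm_smul, Real.norm_eq_abs, mul_pow, sq_abs, hx1, hz1]
      ring
    linarith
  -- auxiliary: continuity and integrability
  have hcont_p : Continuous (fun t : ℝ => t ^ p) := Real.continuous_rpow_const (le_of_lt hp0)
  have hcont : ∀ v : EuclideanSpace ℝ (Fin (n+1)),
      Continuous (fun y : Sph n =>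
        Real.arccos (inner ℝ v (y : EuclideanSpace ℝ (Fin (n+1)))) ^ p) := by
    intro v
    exact hcont_p.comp (Real.continuous_arccos.comp
      (Continuous.inner continuous_const continuous_subtype_val))
  have hint : ∀ v : EuclideanSpace ℝ (Fin (n+1)),
      Integrable (fun y : Sph n =>
        Real.arccos (inner ℝ v (y : EuclideanSpace ℝ (Fin (n+1)))) ^ p) μ := by
    intro v
    refine (integrable_const (Real.pi ^ p)).mono' (hcont v).aestronglyMeasurable ?_
    filter_upwards with y
    rw [Real.norm_eq_abs, abs_of_nonneg (Real.rpow_nonneg (Real.arccos_nonneg _) _)]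
    exact Real.rpow_le_rpow (Real.arccos_nonneg _) (Real.arccos_le_pi _) (le_of_lt hp0)
  -- the difference quotient as a function on the sphere
  set F : ℝ → Sph n → ℝ := fun s y =>
    (Real.arccos (inner ℝ (Real.cos s • X + Real.sin s • Z)
        (y : EuclideanSpace ℝ (Fin (n+1)))) ^ p -
      2 * Real.arccos (inner ℝ X (y : EuclideanSpace ℝ (Fin (n+1)))) ^ p +
      Real.arccos (inner ℝ (Real.cos s • X - Real.sin s • Z)
        (y : EuclideanSpace ℝ (Fin (n+1)))) ^ p) / s with hF
  set f : Sph n → ℝ :=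
    Set.indicator {(-x : Sph n)} (fun _ => -(2 * (p * Real.pi ^ (p - 1)))) with hfdef
  have e1 : ∀ (s : ℝ) (y : Sph n),
      (inner ℝ (Real.cos s • X + Real.sin s • Z) (y : EuclideanSpace ℝ (Fin (n+1))) : ℝ)
        = (inner ℝ X (y : EuclideanSpace ℝ (Fin (n+1))) : ℝ) * Real.cos s +
          (inner ℝ Z (y : EuclideanSpace ℝ (Fin (n+1))) : ℝ) * Real.sin s := by
    intro s y
    simp only [inner_add_left, real_inner_smul_left]
    ring
  have e2 : ∀ (s : ℝ) (y : Sph n),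
      (inner ℝ (Real.cos s • X - Real.sin s • Z) (y : EuclideanSpace ℝ (Fin (n+1))) : ℝ)
        = (inner ℝ X (y : EuclideanSpace ℝ (Fin (n+1))) : ℝ) * Real.cos s +
          (-(inner ℝ Z (y : EuclideanSpace ℝ (Fin (n+1))) : ℝ)) * Real.sin s := by
    intro s y
    simp only [inner_sub_left, real_inner_smul_left]
    ring
  have heq : ∀ s : ℝ,
      (sphPotential p μ (Real.cos s • X + Real.sin s • Z) -
        2 * sphPotential p μ X +
        sphPotential p μ (Real.cos s • X - Real.sin s • Z)) / s = ∫ y, F s y ∂μ := by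
    intro s
    simp only [hF, sphPotential]
    rw [MeasureTheory.integral_div]
    congr 1
    have i2 : Integrable (fun y : Sph n =>
        2 * Real.arccos (inner ℝ X (y : EuclideanSpace ℝ (Fin (n+1)))) ^ p) μ :=
      (hint _).const_mul 2
    have i1 : Integrable (fun y : Sph n =>
        Real.arccos (inner ℝ (Real.cos s • X + Real.sin s • Z)
          (y : EuclideanSpace ℝ (Fin (n+1)))) ^ p -
        2 * Real.arccos (inner ℝ X (y : EuclideanSpace ℝ (Fin (n+1)))) ^ p) μ :=
      (hint _).sub i2
    rw [integral_add i1 (hint _), integral_sub (hint _) i2, integral_const_mul]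
  have hC0 : (0:ℝ) ≤ p * Real.pi ^ (p - 1) := by positivity
  have hFmeas : ∀ s : ℝ, AEStronglyMeasurable (F s) μ := by
    intro s
    apply Continuous.aestronglyMeasurable
    exact (((hcont _).sub (continuous_const.mul (hcont _))).add (hcont _)).div_const s
  have hbound : ∀ᶠ s in nhdsWithin (0:ℝ) (Set.Ioi 0), ∀ᵐ y ∂μ,
      ‖F s y‖ ≤ 2 * (p * Real.pi ^ (p - 1)) := by
    filter_upwards [Ioc_mem_nhdsGT_of_mem (Set.mem_Ico.mpr ⟨le_refl (0:ℝ), hπ⟩)] with s hs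
    filter_upwards with y
    obtain ⟨hs0, hsπ⟩ := hs
    have hab := bessel y
    have hab' : (inner ℝ X (y : EuclideanSpace ℝ (Fin (n+1))) : ℝ) ^ 2 +
        (-(inner ℝ Z (y : EuclideanSpace ℝ (Fin (n+1))) : ℝ)) ^ 2 ≤ 1 := by
      rw [neg_pow]; simpa using hab
    have k1 := key_ineq hab hs0.le hsπ
    have k2 := key_ineq hab' hs0.le hsπ
    have hIcc : ∀ t : ℝ, Real.arccos t ∈ Set.Icc 0 Real.pi :=
      fun t => ⟨Real.arccos_nonneg t, Real.arccos_le_pi t⟩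
    have l1 := rpow_lip_pi hp.le
      (u := Real.arccos ((inner ℝ X (y : EuclideanSpace ℝ (Fin (n+1))) : ℝ) * Real.cos s +
        (inner ℝ Z (y : EuclideanSpace ℝ (Fin (n+1))) : ℝ) * Real.sin s))
      (v := Real.arccos (inner ℝ X (y : EuclideanSpace ℝ (Fin (n+1))) : ℝ))
      (hIcc _) (hIcc _)
    have l2 := rpow_lip_pi hp.le
      (u := Real.arccos ((inner ℝ X (y : EuclideanSpace ℝ (Fin (n+1))) : ℝ) * Real.cos s +
        (-(inner ℝ Z (y : EuclideanSpace ℝ (Fin (n+1))) : ℝ)) * Real.sin s))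
      (v := Real.arccos (inner ℝ X (y : EuclideanSpace ℝ (Fin (n+1))) : ℝ))
      (hIcc _) (hIcc _)
    simp only [hF, e1 s y, e2 s y]
    rw [Real.norm_eq_abs, abs_div, abs_of_pos hs0, div_le_iff₀ hs0]
    set A := Real.arccos ((inner ℝ X (y : EuclideanSpace ℝ (Fin (n+1))) : ℝ) * Real.cos s +
      (inner ℝ Z (y : EuclideanSpace ℝ (Fin (n+1))) : ℝ) * Real.sin s) ^ p with hA
    set B := Real.arccos (inner ℝ X (y : EuclideanSpace ℝ (Fin (n+1))) : ℝ) ^ p with hB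
    set C := Real.arccos ((inner ℝ X (y : EuclideanSpace ℝ (Fin (n+1))) : ℝ) * Real.cos s +
      (-(inner ℝ Z (y : EuclideanSpace ℝ (Fin (n+1))) : ℝ)) * Real.sin s) ^ p with hC
    have split : A - 2 * B + C = (A - B) + (C - B) := by ring
    calc |A - 2 * B + C| ≤ |A - B| + |C - B| := by rw [split]; exact abs_add_le _ _
      _ ≤ p * Real.pi ^ (p - 1) * s + p * Real.pi ^ (p - 1) * s := by
          refine add_le_add (l1.trans ?_) (l2.trans ?_)
          · exact mul_le_mul_of_nonneg_left k1 hC0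
          · exact mul_le_mul_of_nonneg_left k2 hC0
      _ = 2 * (p * Real.pi ^ (p - 1)) * s := by ring
  have hmono : nhdsWithin (0:ℝ) (Set.Ioi 0) ≤ nhdsWithin (0:ℝ) {(0:ℝ)}ᶜ :=
    nhdsWithin_mono 0 (fun t ht => ne_of_gt ht)
  have hlim : ∀ y : Sph n,
      Tendsto (fun s => F s y) (nhdsWithin (0:ℝ) (Set.Ioi 0)) (nhds (f y)) := by
    intro y
    by_cases hy : y = -x
    · subst hy
      have hcoe : ((-x : Sph n) : EuclideanSpace ℝ (Fin (n+1))) = -X := coe_neg_sphere x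
      have ai : (inner ℝ X ((-x : Sph n) : EuclideanSpace ℝ (Fin (n+1))) : ℝ) = -1 := by
        rw [hcoe, inner_neg_right, real_inner_self_eq_norm_sq, hx1]
        norm_num
      have bi : (inner ℝ Z ((-x : Sph n) : EuclideanSpace ℝ (Fin (n+1))) : ℝ) = 0 := by
        rw [hcoe, inner_neg_right, hiZX, neg_zero]
      have hfval : f (-x) = -(2 * (p * Real.pi ^ (p - 1))) := by
        rw [hfdef]
        exact Set.indicator_of_mem (Set.mem_singleton _) _
      rw [hfval]
      have hG : HasDerivAt (fun t : ℝ => 2 * (Real.pi - t) ^ p)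
          (-(2 * (p * Real.pi ^ (p - 1)))) 0 := by
        have h1 : HasDerivAt (fun t : ℝ => Real.pi - t) (-1) 0 :=
          (hasDerivAt_id (0:ℝ)).const_sub Real.pi
        have h2 : HasDerivAt (fun u : ℝ => u ^ p) (p * Real.pi ^ (p - 1))
            ((fun t : ℝ => Real.pi - t) 0) := by
          simpa using Real.hasDerivAt_rpow_const (x := Real.pi) (p := p) (Or.inl hπ.ne')
        have h3 := (h2.comp 0 h1).const_mul 2
        refine h3.congr_deriv ?_
        ring
      have hslope := hasDerivAt_iff_tendsto_slope.mp hG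
      refine Tendsto.congr' ?_ (hslope.mono_left hmono)
      filter_upwards [Ioo_mem_nhdsGT_of_mem (Set.mem_Ico.mpr ⟨le_refl (0:ℝ), hπ⟩)] with s hs
      rw [slope_def_field]
      simp only [hF, e1 s, e2 s, ai, bi]
      have harg1 : (-1 : ℝ) * Real.cos s + 0 * Real.sin s = -Real.cos s := by ring
      have harg2 : (-1 : ℝ) * Real.cos s + (-(0:ℝ)) * Real.sin s = -Real.cos s := by ring
      rw [harg1, harg2, Real.arccos_neg, Real.arccos_cos hs.1.le hs.2.le,
        Real.arccos_neg_one]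
      rw [sub_zero]
      ring
    · have hfval : f y = 0 := by
        rw [hfdef]
        exact Set.indicator_of_notMem (by simpa using hy) _
      rw [hfval]
      have hy1 : ‖(y : EuclideanSpace ℝ (Fin (n+1)))‖ = 1 := mem_sphere_zero_iff_norm.mp y.2
      have hane : (inner ℝ X (y : EuclideanSpace ℝ (Fin (n+1))) : ℝ) ≠ -1 := by
        intro h
        apply hy
        have h1 : (inner ℝ X (-(y : EuclideanSpace ℝ (Fin (n+1)))) : ℝ) = 1 := by
          rw [inner_neg_right, h]; norm_num
        have h2 := (inner_eq_one_iff_of_norm_eq_one hx1 (by rw [norm_neg]; exact hy1)).mp h1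
        apply Subtype.ext
        rw [coe_neg_sphere]
        have h3 : -X = (y : EuclideanSpace ℝ (Fin (n+1))) := by rw [h2, neg_neg]
        rw [← hX, ← h3]
      by_cases ha1 : (inner ℝ X (y : EuclideanSpace ℝ (Fin (n+1))) : ℝ) = 1
      · -- y = x, the integrand behaves like 2 s^p
        have hyx : (y : EuclideanSpace ℝ (Fin (n+1))) = X :=
          ((inner_eq_one_iff_of_norm_eq_one hx1 hy1).mp ha1).symm
        have hb0 : (inner ℝ Z (y : EuclideanSpace ℝ (Fin (n+1))) : ℝ) = 0 := by
          rw [hyx]; exact hiZX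
        have htd : Tendsto (fun s : ℝ => 2 * s ^ (p - 1))
            (nhdsWithin (0:ℝ) (Set.Ioi 0)) (nhds 0) := by
          have h0 : Tendsto (fun s : ℝ => s ^ (p - 1)) (nhds 0) (nhds ((0:ℝ) ^ (p - 1))) :=
            (Real.continuousAt_rpow_const 0 (p - 1) (Or.inr (by linarith))).tendsto
          rw [Real.zero_rpow (ne_of_gt (by linarith : (0:ℝ) < p - 1))] at h0
          simpa using (h0.mono_left nhdsWithin_le_nhds).const_mul (2:ℝ)
        refine Tendsto.congr' ?_ htd
        filter_upwards [Ioo_mem_nhdsGT_of_mem (Set.mem_Ico.mpr ⟨le_refl (0:ℝ), hπ⟩)] with s hs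
        simp only [hF, e1 s, e2 s, ha1, hb0]
        have harg1 : (1 : ℝ) * Real.cos s + 0 * Real.sin s = Real.cos s := by ring
        have harg2 : (1 : ℝ) * Real.cos s + (-(0:ℝ)) * Real.sin s = Real.cos s := by ring
        rw [harg1, harg2, Real.arccos_cos hs.1.le hs.2.le, Real.arccos_one,
          Real.zero_rpow (ne_of_gt hp0)]
        rw [Real.rpow_sub_one (ne_of_gt hs.1)]
        ring
      · -- interior case: differentiable, symmetric, derivative 0
        set a := (inner ℝ X (y : EuclideanSpace ℝ (Fin (n+1))) : ℝ) with hadef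
        set b := (inner ℝ Z (y : EuclideanSpace ℝ (Fin (n+1))) : ℝ) with hbdef
        have harcpos : 0 < Real.arccos a :=
          Real.arccos_pos.mpr (lt_of_le_of_ne (by
            have := bessel y
            nlinarith) ha1)
        have hu : ∀ c : ℝ, HasDerivAt (fun t : ℝ => a * Real.cos t + c * Real.sin t) c 0 := by
          intro c
          have h := ((Real.hasDerivAt_cos 0).const_mul a).add ((Real.hasDerivAt_sin 0).const_mul c)
          exact h.congr_deriv (by simp)
        have hterm : ∀ c : ℝ,
            HasDerivAt (fun t : ℝ => Real.arccos (a * Real.cos t + c * Real.sin t) ^ p)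
              (p * Real.arccos a ^ (p - 1) * (-(1 / Real.sqrt (1 - a ^ 2)) * c)) 0 := by
          intro c
          have h1 : HasDerivAt (fun t : ℝ => Real.arccos (a * Real.cos t + c * Real.sin t))
              (-(1 / Real.sqrt (1 - a ^ 2)) * c) 0 := by
            have harc : HasDerivAt Real.arccos (-(1 / Real.sqrt (1 - a ^ 2)))
                ((fun t : ℝ => a * Real.cos t + c * Real.sin t) 0) := by
              simpa using Real.hasDerivAt_arccos hane ha1
            have := harc.comp 0 (hu c); exact this
          have h2 : HasDerivAt (fun u : ℝ => u ^ p) (p * Real.arccos a ^ (p - 1))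
              ((fun t : ℝ => Real.arccos (a * Real.cos t + c * Real.sin t)) 0) := by
            simpa using Real.hasDerivAt_rpow_const
              (x := Real.arccos a) (p := p) (Or.inl harcpos.ne')
          exact h2.comp 0 h1
        have hG : HasDerivAt (fun t : ℝ =>
            Real.arccos (a * Real.cos t + b * Real.sin t) ^ p - 2 * Real.arccos a ^ p +
              Real.arccos (a * Real.cos t + (-b) * Real.sin t) ^ p) 0 0 := by
          have h := ((hterm b).sub_const (2 * Real.arccos a ^ p)).add (hterm (-b))
          refine h.congr_deriv ?_
          ring
        have hslope := hasDerivAt_iff_tendsto_slope.mp hG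
        refine Tendsto.congr' ?_ (hslope.mono_left hmono)
        filter_upwards [self_mem_nhdsWithin] with s hs
        rw [slope_def_field]
        simp only [hF, e1 s, e2 s, Real.cos_zero, Real.sin_zero, mul_one, mul_zero,
          add_zero, sub_zero]
        ring
  have hmain : Tendsto (fun s => ∫ y, F s y ∂μ) (nhdsWithin (0:ℝ) (Set.Ioi 0))
      (nhds (∫ y, f y ∂μ)) := by
    exact tendsto_integral_filter_of_dominated_convergence
      (fun _ => 2 * (p * Real.pi ^ (p - 1)))
      (Eventually.of_forall hFmeas) hbound (integrable_const _) (ae_of_all μ hlim)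
  have hfint : ∫ y, f y ∂μ = -2 * p * Real.pi ^ (p - 1) * (μ {-x}).toReal := by
    rw [hfdef, integral_indicator_const _ (measurableSet_singleton _)]
    rw [smul_eq_mul]
    rw [measureReal_def]
    ring
  have hfun : (fun s : ℝ =>
      (sphPotential p μ (Real.cos s • X + Real.sin s • Z) - 2 * sphPotential p μ X +
        sphPotential p μ (Real.cos s • X - Real.sin s • Z)) / s)
      = fun s => ∫ y, F s y ∂μ := funext heq
  rw [hfun, ← hfint]
  exact hmain
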